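/- arXiv:1107.4989 — 2 statements merged into one kernel-verified Lean document; each statement's English description precedes it below -/
import Mathlib

section
/- In the setting of the Main Theorem's proof with φ(x) = inf S_x, if g(c^p) = g(x^k c^q) for some k, p, q+1 ∈ Aₙ, then φ(x) = (p-q)/k; in particular φ(c) = 1. -/
/-- `f : Iⁿ → I` is associative in the `n`-ary sense: for each `i` with `i+1 < n`,
substituting `f` into positions `i` or `i+1` of a `(2n-1)`-tuple over `I` gives
the same result. -/
def NAssocOn (n : ℕ) (I : Set ℝ) (f : (Fin n → ℝ) → ℝ) : Prop :=
  ∀ x : ℕ → ℝ, (∀ j, j < 2 * n - 1 → x j ∈ I) → ∀ i : ℕ, i + 1 < n →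
    f (fun j : Fin n => if (j : ℕ) < i then x j
        else if (j : ℕ) = i then f (fun l : Fin n => x (i + (l : ℕ)))
        else x ((j : ℕ) + n - 1)) =
    f (fun j : Fin n => if (j : ℕ) < i + 1 then x j
        else if (j : ℕ) = i + 1 then f (fun l : Fin n => x (i + 1 + (l : ℕ)))
        else x ((j : ℕ) + n - 1))

/-- `f` is symmetric on `Iⁿ`: invariant under all permutations of its arguments. -/
def SymmOn (n : ℕ) (I : Set ℝ) (f : (Fin n → ℝ) → ℝ) : Prop :=
  ∀ x : Fin n → ℝ, (∀ i, x i ∈ I) → ∀ σ : Equiv.Perm (Fin n), f (x ∘ σ) = f x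

/-- `f` is cancellative on `Iⁿ`: one-to-one in each variable. -/
def CancOn (n : ℕ) (I : Set ℝ) (f : (Fin n → ℝ) → ℝ) : Prop :=
  ∀ k : Fin n, ∀ x x' : Fin n → ℝ, (∀ i, x i ∈ I) → (∀ i, x' i ∈ I) →
    (∀ i, i ≠ k → x i = x' i) → f x = f x' → x k = x' k

/-- The set `S_x`: rationals `(p-q)/k` with `k, p, q+1 ∈ Aₙ` such that
`g(c^p) > g(x^k c^q)`. -/
def SxSet (n : ℕ) (g : List ℝ → ℝ) (c x : ℝ) : Set ℝ :=
  {r | ∃ k p q : ℕ, 1 ≤ k ∧ 1 ≤ p ∧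
    k % (n - 1) = 1 % (n - 1) ∧ p % (n - 1) = 1 % (n - 1) ∧ q % (n - 1) = 0 ∧
    r = ((p : ℝ) - (q : ℝ)) / (k : ℝ) ∧
    g (List.replicate k x ++ List.replicate q c) < g (List.replicate p c)}

/-- The set `S = {(p-q)/k : k, p, q+1 ∈ Aₙ}`. -/
def Sset (n : ℕ) : Set ℝ :=
  {r | ∃ k p q : ℕ, 1 ≤ k ∧ 1 ≤ p ∧
    k % (n - 1) = 1 % (n - 1) ∧ p % (n - 1) = 1 % (n - 1) ∧ q % (n - 1) = 0 ∧
    r = ((p : ℝ) - (q : ℝ)) / (k : ℝ)}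

namespace Stmt17

lemma mem_getD {I : Set ℝ} {l : List ℝ} (h : ∀ a ∈ l, a ∈ I) {i : ℕ} (hi : i < l.length) :
    l.getD i 0 ∈ I := by
  rw [List.getD_eq_getElem _ _ hi]
  exact h _ (List.getElem_mem _)

/-- Sign constancy of a nonvanishing continuous function on the relevant convex set. -/
lemma sign_const {n : ℕ} {I : Set ℝ}
    (hI : I.OrdConnected)
    {f : (Fin n → ℝ) → ℝ}
    (hcont : ContinuousOn f {x | ∀ i, x i ∈ I})
    (hcanc : CancOn n I f) (hn : 0 < n) :
    (∀ v : Fin n → ℝ, (∀ i, v i ∈ I) → ∀ a b : ℝ, a ∈ I → b ∈ I → a < b →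
        f (Function.update v ⟨0, hn⟩ a) < f (Function.update v ⟨0, hn⟩ b)) ∨
    (∀ v : Fin n → ℝ, (∀ i, v i ∈ I) → ∀ a b : ℝ, a ∈ I → b ∈ I → a < b →
        f (Function.update v ⟨0, hn⟩ b) < f (Function.update v ⟨0, hn⟩ a)) := by
  set z : Fin n := ⟨0, hn⟩
  set S : Set ((Fin n → ℝ) × ℝ × ℝ) :=
    {s | (∀ i, s.1 i ∈ I) ∧ s.2.1 ∈ I ∧ s.2.2 ∈ I ∧ s.2.1 < s.2.2} with hS
  set φ : ((Fin n → ℝ) × ℝ × ℝ) → ℝ → (Fin n → ℝ) :=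
    fun s t => Function.update s.1 z t with hφ
  set D : ((Fin n → ℝ) × ℝ × ℝ) → ℝ := fun s => f (φ s s.2.2) - f (φ s s.2.1) with hD
  have hupdmem : ∀ (s : (Fin n → ℝ) × ℝ × ℝ), (∀ i, s.1 i ∈ I) → ∀ t, t ∈ I →
      ∀ i, φ s t i ∈ I := by
    intro s hs t ht i
    rcases eq_or_ne i z with rfl | h
    · simpa [hφ] using ht
    · simpa [hφ, Function.update_of_ne h] using hs i
  -- D never vanishes on S
  have hDne : ∀ s ∈ S, D s ≠ 0 := by
    rintro ⟨v, a, b⟩ ⟨hv, ha, hb, hab⟩ h0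
    have heq : f (φ (v, a, b) b) = f (φ (v, a, b) a) := by
      have := sub_eq_zero.mp h0; linarith [this]
    have := hcanc z (φ (v, a, b) b) (φ (v, a, b) a)
      (hupdmem _ hv _ hb) (hupdmem _ hv _ ha)
      (fun i hi => by simp [hφ, Function.update_of_ne hi]) heq
    simp only [hφ, Function.update_self] at this
    exact absurd this (ne_of_gt hab)
  -- S is convex, hence preconnected
  have hconv : Convex ℝ S := by
    have h1 : Convex ℝ (Set.univ.pi (fun _ : Fin n => I)) :=
      convex_pi fun i _ => convex_iff_ordConnected.mpr hI
    have h2 : Convex ℝ ((I ×ˢ I) ∩ {p : ℝ × ℝ | p.1 - p.2 < 0}) := by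
      refine ((convex_iff_ordConnected.mpr hI).prod (convex_iff_ordConnected.mpr hI)).inter ?_
      exact convex_halfSpace_lt ⟨fun x y => by simp [Prod.fst_add, Prod.snd_add]; ring,
        fun c x => by simp [Prod.smul_fst, Prod.smul_snd]; ring⟩ 0
    have : S = (Set.univ.pi (fun _ : Fin n => I)) ×ˢ ((I ×ˢ I) ∩ {p : ℝ × ℝ | p.1 - p.2 < 0}) := by
      ext ⟨v, a, b⟩
      simp [hS, Set.mem_pi, and_assoc, sub_neg]
    rw [this]
    exact h1.prod h2
  have hpre : IsPreconnected S := hconv.isPreconnected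
  -- D is continuous on S
  have hDcont : ContinuousOn D S := by
    have hφc : ∀ (sel : ((Fin n → ℝ) × ℝ × ℝ) → ℝ),
        Continuous sel →
        (∀ s ∈ S, sel s ∈ I) →
        ContinuousOn (fun s => f (φ s (sel s))) S := by
      intro sel hsel hselI
      have hcφ : Continuous (fun s => φ s (sel s)) := by
        apply continuous_pi
        intro i
        rcases eq_or_ne i z with rfl | h
        · simpa [hφ] using hsel
        · simp only [hφ, Function.update_of_ne h]
          exact (continuous_apply i).comp continuous_fst
      refine hcont.comp hcφ.continuousOn ?_
      intro s hs
      exact hupdmem s hs.1 _ (hselI s hs)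
    exact (hφc (fun s => s.2.2) (continuous_snd.snd) (fun s hs => hs.2.2.1)).sub
      (hφc (fun s => s.2.1) (continuous_snd.fst) (fun s hs => hs.2.1))
  by_cases hpos : ∀ s ∈ S, 0 < D s
  · left
    intro v hv a b ha hb hab
    have := hpos (v, a, b) ⟨hv, ha, hb, hab⟩
    simp only [hD, hφ] at this
    linarith
  · right
    push_neg at hpos
    obtain ⟨s₀, hs₀, hs₀le⟩ := hpos
    have hs₀neg : D s₀ < 0 := lt_of_le_of_ne hs₀le (hDne s₀ hs₀)
    intro v hv a b ha hb hab
    have hmem : (v, a, b) ∈ S := ⟨hv, ha, hb, hab⟩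
    have hneg : D (v, a, b) < 0 := by
      by_contra hge
      push_neg at hge
      have hpos' : 0 < D (v, a, b) := lt_of_le_of_ne hge (Ne.symm (hDne _ hmem))
      obtain ⟨x, hx, hx0⟩ := hpre.intermediate_value₂ hs₀ hmem hDcont
        continuousOn_const (le_of_lt hs₀neg) (le_of_lt hpos')
      exact hDne x hx hx0
    simp only [hD, hφ] at hneg
    linarith

lemma mono0 {n : ℕ} (hn : 2 ≤ n) {I : Set ℝ} (hI : I.OrdConnected)
    {f : (Fin n → ℝ) → ℝ}
    (hmap : ∀ x : Fin n → ℝ, (∀ i, x i ∈ I) → f x ∈ I)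
    (hcont : ContinuousOn f {x | ∀ i, x i ∈ I})
    (hcanc : CancOn n I f) (hassoc : NAssocOn n I f)
    {c : ℝ} (hc : c ∈ I) :
    ∀ v : Fin n → ℝ, (∀ i, v i ∈ I) → ∀ a b : ℝ, a ∈ I → b ∈ I → a < b →
      f (Function.update v ⟨0, by omega⟩ a) < f (Function.update v ⟨0, by omega⟩ b) := by
  have hn0 : 0 < n := by omega
  intro v hv a b ha hb hab
  rcases sign_const hI hcont hcanc hn0 with h | h
  · exact h v hv a b ha hb hab
  exfalso
  set z : Fin n := ⟨0, hn0⟩ with hz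
  have ho : 1 < n := by omega
  set o : Fin n := ⟨1, ho⟩ with hoo
  set w : Fin n → ℝ := fun _ => c with hw
  have hwI : ∀ i, w i ∈ I := fun _ => hc
  have hupd : ∀ (k : Fin n) (u : Fin n → ℝ), (∀ i, u i ∈ I) → ∀ t, t ∈ I →
      ∀ i, Function.update u k t i ∈ I := by
    intro k u hu t ht i
    rcases eq_or_ne i k with rfl | hik
    · simpa using ht
    · simpa [Function.update_of_ne hik] using hu i
  have key : ∀ t : ℝ, t ∈ I →
      f (Function.update w z (f (Function.update w z t))) =
      f (Function.update (Function.update w o (f w)) z t) := by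
    intro t ht
    have hx : ∀ j : ℕ, (if j = 0 then t else c) ∈ I := fun j => by
      split
      · exact ht
      · exact hc
    have H := hassoc (fun j => if j = 0 then t else c) (fun j _ => hx j) 0 (by omega)
    have e1 : Function.update w z (f (Function.update w z t)) =
        (fun j : Fin n => if (j : ℕ) < 0 then (if (j : ℕ) = 0 then t else c)
          else if (j : ℕ) = 0 then f (fun l : Fin n => if (0 + (l : ℕ)) = 0 then t else c)
          else if ((j : ℕ) + n - 1) = 0 then t else c) := by
      funext j
      rcases eq_or_ne j z with rfl | hj
      · have hin : (fun l : Fin n => if (l : ℕ) = 0 then t else c) =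
            Function.update w z t := by
          funext l
          rcases eq_or_ne l z with rfl | hl
          · simp [hz]
          · have hl0 : (l : ℕ) ≠ 0 := fun hh => hl (Fin.ext hh)
            simp [Function.update_of_ne hl, hl0, hw]
        simp [hz]
        rw [hin]
      · have hj0 : (j : ℕ) ≠ 0 := fun hh => hj (Fin.ext hh)
        have h3 : (j : ℕ) + n - 1 ≠ 0 := by omega
        simp [Function.update_of_ne hj, hj0, h3, hw]
    have e2 : Function.update (Function.update w o (f w)) z t =
        (fun j : Fin n => if (j : ℕ) < 0 + 1 then (if (j : ℕ) = 0 then t else c)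
          else if (j : ℕ) = 0 + 1 then f (fun l : Fin n => if (0 + 1 + (l : ℕ)) = 0 then t else c)
          else if ((j : ℕ) + n - 1) = 0 then t else c) := by
      funext j
      rcases eq_or_ne j z with rfl | hj
      · simp [hz]
      · have hj0 : (j : ℕ) ≠ 0 := fun hh => hj (Fin.ext hh)
        rcases eq_or_ne j o with rfl | hj1
        · rw [Function.update_of_ne hj]
          simp [hoo, hw]
        · have hj1' : (j : ℕ) ≠ 1 := fun hh => hj1 (Fin.ext hh)
          have h2 : ¬ ((j : ℕ) < 0 + 1) := by omega
          have h3 : (j : ℕ) + n - 1 ≠ 0 := by omega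
          simp [Function.update_of_ne hj, Function.update_of_ne hj1, hj1', h2, h3, hw]
    rw [e1, e2]
    exact H
  have hA : f (Function.update w z b) < f (Function.update w z a) := h w hwI a b ha hb hab
  have hL : f (Function.update w z (f (Function.update w z a))) <
      f (Function.update w z (f (Function.update w z b))) :=
    h w hwI _ _ (hmap _ (hupd z w hwI b hb)) (hmap _ (hupd z w hwI a ha)) hA
  have hR : f (Function.update (Function.update w o (f w)) z b) <
      f (Function.update (Function.update w o (f w)) z a) :=
    h _ (hupd o w hwI (f w) (hmap w hwI)) a b ha hb hab
  rw [key a ha, key b hb] at hL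
  linarith


section GLemmas

variable {n : ℕ} (hn : 2 ≤ n) {I : Set ℝ} (hI : I.OrdConnected)
  {f : (Fin n → ℝ) → ℝ}
  (hmap : ∀ x : Fin n → ℝ, (∀ i, x i ∈ I) → f x ∈ I)
  (hcont : ContinuousOn f {x | ∀ i, x i ∈ I})
  (hsym : SymmOn n I f) (hcanc : CancOn n I f) (hassoc : NAssocOn n I f)
  {g : List ℝ → ℝ}
  (hg1 : ∀ a : ℝ, g [a] = a)
  (hgn : ∀ l : List ℝ, l.length = n → g l = f (fun i : Fin n => l.getD (i : ℕ) 0))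
  (hgrec : ∀ l r : List ℝ, l ≠ [] → l.length % (n - 1) = 1 % (n - 1) →
    r.length = n - 1 → g (l ++ r) = g (g l :: r))
  {c : ℝ} (hc : c ∈ I)

lemma mod_one_add {m a b : ℕ} (ha : a % m = 1 % m) (hb : b % m = 0) :
    (a + b) % m = 1 % m := by
  rw [Nat.add_mod, ha, hb, Nat.add_zero, Nat.mod_mod_of_dvd 1 dvd_rfl]

lemma mod_zero_add {m a b : ℕ} (ha : a % m = 0) (hb : b % m = 1 % m) :
    (a + b) % m = 1 % m := by
  rw [Nat.add_mod, ha, hb, Nat.zero_add, Nat.mod_mod_of_dvd 1 dvd_rfl]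

lemma mod_sub {m a : ℕ} (h : m ≤ a) : (a - m) % m = a % m := by
  conv_rhs => rw [show a = (a - m) + m by omega]
  rw [Nat.add_mod_right]

include hn in
/-- A list with length `≡ 1 (mod n-1)` and length `≥ 2` has length `≥ n`. -/
lemma len_ge {N : ℕ} (h2 : 2 ≤ N) (hmod : N % (n - 1) = 1 % (n - 1)) : n ≤ N := by
  by_contra h
  push_neg at h
  set m := n - 1 with hm
  have hm1 : 1 ≤ m := by omega
  rcases eq_or_lt_of_le hm1 with h1 | h1
  · omega
  · -- 2 ≤ m
    have hNm : N ≤ m := by omega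
    rcases eq_or_lt_of_le hNm with rfl | hlt
    · rw [Nat.mod_self, Nat.mod_eq_of_lt h1] at hmod
      omega
    · rw [Nat.mod_eq_of_lt hlt, Nat.mod_eq_of_lt h1] at hmod
      omega

include hn hmap hg1 hgn hgrec in
lemma gmem : ∀ N (l : List ℝ), l.length = N → l ≠ [] → (∀ a ∈ l, a ∈ I) →
    l.length % (n - 1) = 1 % (n - 1) → g l ∈ I := by
  intro N
  induction N using Nat.strong_induction_on with
  | _ N IH =>
    intro l hlen hne hmemI hmod
    have hN1 : 1 ≤ N := by
      rcases Nat.eq_zero_or_pos N with rfl | h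
      · exact absurd (List.length_eq_zero_iff.mp hlen) hne
      · exact h
    rcases eq_or_lt_of_le hN1 with h1 | h2
    · obtain ⟨a, rfl⟩ := List.length_eq_one_iff.mp (hlen.trans h1.symm)
      rw [hg1]
      exact hmemI a (by simp)
    · have hnN : n ≤ N := len_ge hn h2 (hlen ▸ hmod)
      set l₁ := l.take (N - (n - 1)) with hl₁
      set l₂ := l.drop (N - (n - 1)) with hl₂
      have hlen1 : l₁.length = N - (n - 1) := by
        rw [hl₁, List.length_take, hlen]; omega
      have hlen2 : l₂.length = n - 1 := by
        rw [hl₂, List.length_drop, hlen]; omega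
      have hne1 : l₁ ≠ [] := by
        intro h; rw [h] at hlen1; simp at hlen1; omega
      have hmod1 : l₁.length % (n - 1) = 1 % (n - 1) := by
        rw [hlen1, mod_sub (by omega)]
        exact hlen ▸ hmod
      have hsplit : l₁ ++ l₂ = l := List.take_append_drop _ _
      have hg : g l = g (g l₁ :: l₂) := by
        rw [← hsplit]
        exact hgrec l₁ l₂ hne1 hmod1 hlen2
      rw [hg, hgn _ (by simp [hlen2]; omega)]
      apply hmap
      intro i
      apply mem_getD
      · intro a hax
        rcases List.mem_cons.mp hax with rfl | h
        · exact IH (N - (n - 1)) (by omega) l₁ hlen1 hne1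
            (fun a ha => hmemI a (List.mem_of_mem_take ha)) hmod1
        · exact hmemI a (List.mem_of_mem_drop h)
      · simp [hlen2]
        omega

include hn hg1 hgrec in
lemma grep : ∀ N (r A : List ℝ), r.length = N → A ≠ [] →
    A.length % (n - 1) = 1 % (n - 1) → r.length % (n - 1) = 0 →
    g (A ++ r) = g (g A :: r) := by
  intro N
  induction N using Nat.strong_induction_on with
  | _ N IH =>
    intro r A hlen hne hmodA hmodr
    rcases Nat.eq_zero_or_pos N with rfl | hN
    · rw [List.length_eq_zero_iff.mp hlen]
      rw [List.append_nil]
      exact (hg1 (g A)).symm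
    · have hmN : n - 1 ≤ N := by
        by_contra h
        push_neg at h
        rw [hlen, Nat.mod_eq_of_lt h] at hmodr
        omega
      set r₁ := r.take (N - (n - 1)) with hr₁
      set r₂ := r.drop (N - (n - 1)) with hr₂
      have hlen1 : r₁.length = N - (n - 1) := by simp [hr₁, hlen]
      have hlen2 : r₂.length = n - 1 := by simp [hr₂, hlen]; omega
      have hmod1 : r₁.length % (n - 1) = 0 := by
        rw [hlen1, mod_sub hmN, ← hlen, hmodr]
      have hsplit : r₁ ++ r₂ = r := List.take_append_drop _ _
      have h1 : g (A ++ r) = g (g (A ++ r₁) :: r₂) := by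
        rw [← hsplit, ← List.append_assoc]
        exact hgrec (A ++ r₁) r₂ (by simp [hne]) (by
          rw [List.length_append]
          exact mod_one_add hmodA hmod1) hlen2
      have h2 : g (A ++ r₁) = g (g A :: r₁) := by
        have hlt : N - (n - 1) < N := by omega
        exact IH (N - (n - 1)) hlt r₁ A hlen1 hne hmodA hmod1
      have h3 : g ((g A :: r₁) ++ r₂) = g (g (g A :: r₁) :: r₂) := by
        exact hgrec (g A :: r₁) r₂ (by simp) (by
          simp only [List.length_cons]
          rw [Nat.add_comm]
          exact mod_one_add (by simp [Nat.mod_mod_of_dvd 1 dvd_rfl]) hmod1) hlen2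
      rw [h1, h2, ← h3, List.cons_append, hsplit]

include hn hI hmap hcont hcanc hassoc hgn hc in
lemma gstep_mono : ∀ r : List ℝ, r.length = n - 1 → (∀ u ∈ r, u ∈ I) →
    ∀ a b : ℝ, a ∈ I → b ∈ I → a < b → g (a :: r) < g (b :: r) := by
  intro r hr hrI a b ha hb hab
  have hn0 : 0 < n := by omega
  have hlena : (a :: r).length = n := by simp [hr]; omega
  have hlenb : (b :: r).length = n := by simp [hr]; omega
  rw [hgn _ hlena, hgn _ hlenb]
  set v : Fin n → ℝ := fun i => (a :: r).getD (i : ℕ) 0 with hv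
  have hvI : ∀ i, v i ∈ I := by
    intro i
    apply mem_getD
    · intro u hu
      rcases List.mem_cons.mp hu with rfl | h
      · exact ha
      · exact hrI u h
    · rw [hlena]; exact i.isLt
  have e1 : v = Function.update v ⟨0, hn0⟩ a := by
    funext i
    rcases eq_or_ne i ⟨0, hn0⟩ with rfl | hi
    · simp [hv]
    · rw [Function.update_of_ne hi]
  have e2 : (fun i : Fin n => (b :: r).getD (i : ℕ) 0) = Function.update v ⟨0, hn0⟩ b := by
    funext i
    rcases eq_or_ne i ⟨0, hn0⟩ with rfl | hi
    · simp
    · rw [Function.update_of_ne hi]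
      have hi0 : (i : ℕ) ≠ 0 := fun hh => hi (Fin.ext hh)
      obtain ⟨j, hj⟩ : ∃ j, (i : ℕ) = j + 1 := ⟨(i : ℕ) - 1, by omega⟩
      simp [hv, hj]
  rw [e2, e1, Function.update_idem]
  exact mono0 hn hI hmap hcont hcanc hassoc hc v hvI a b ha hb hab

include hn hI hmap hcont hcanc hassoc hg1 hgn hgrec hc in
lemma gcons_lt : ∀ N (r : List ℝ), r.length = N → (∀ u ∈ r, u ∈ I) →
    r.length % (n - 1) = 0 → ∀ a b : ℝ, a ∈ I → b ∈ I → a < b →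
    g (a :: r) < g (b :: r) := by
  intro N
  induction N using Nat.strong_induction_on with
  | _ N IH =>
    intro r hlen hrI hmod a b ha hb hab
    rcases Nat.eq_zero_or_pos N with rfl | hN
    · rw [List.length_eq_zero_iff.mp hlen, hg1, hg1]
      exact hab
    · have hmN : n - 1 ≤ N := by
        by_contra h
        push_neg at h
        rw [hlen, Nat.mod_eq_of_lt h] at hmod
        omega
      set r₁ := r.take (N - (n - 1)) with hr₁
      set r₂ := r.drop (N - (n - 1)) with hr₂
      have hlen1 : r₁.length = N - (n - 1) := by simp [hr₁, hlen]
      have hlen2 : r₂.length = n - 1 := by simp [hr₂, hlen]; omega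
      have hmod1 : r₁.length % (n - 1) = 0 := by
        rw [hlen1, mod_sub hmN, ← hlen, hmod]
      have hsplit : r₁ ++ r₂ = r := List.take_append_drop _ _
      have hr₁I : ∀ u ∈ r₁, u ∈ I := fun u hu => hrI u (List.mem_of_mem_take hu)
      have hr₂I : ∀ u ∈ r₂, u ∈ I := fun u hu => hrI u (List.mem_of_mem_drop hu)
      have hmodc : ∀ t : ℝ, (t :: r₁).length % (n - 1) = 1 % (n - 1) := by
        intro t
        simp only [List.length_cons]
        rw [Nat.add_comm]
        exact mod_one_add (by simp [Nat.mod_mod_of_dvd 1 dvd_rfl]) hmod1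
      have ha' : g (a :: r) = g (g (a :: r₁) :: r₂) := by
        rw [← hsplit, ← List.cons_append]
        exact hgrec _ _ (by simp) (hmodc a) hlen2
      have hb' : g (b :: r) = g (g (b :: r₁) :: r₂) := by
        rw [← hsplit, ← List.cons_append]
        exact hgrec _ _ (by simp) (hmodc b) hlen2
      have hIH : g (a :: r₁) < g (b :: r₁) :=
        IH (N - (n - 1)) (by omega) r₁ hlen1 hr₁I hmod1 a b ha hb hab
      have hga : g (a :: r₁) ∈ I :=
        gmem hn hmap hg1 hgn hgrec _ _ rfl (by simp)
          (fun u hu => by rcases List.mem_cons.mp hu with rfl | h; exacts [ha, hr₁I u h])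
          (hmodc a)
      have hgb : g (b :: r₁) ∈ I :=
        gmem hn hmap hg1 hgn hgrec _ _ rfl (by simp)
          (fun u hu => by rcases List.mem_cons.mp hu with rfl | h; exacts [hb, hr₁I u h])
          (hmodc b)
      rw [ha', hb']
      exact gstep_mono hn hI hmap hcont hcanc hassoc hgn hc r₂ hlen2 hr₂I _ _ hga hgb hIH


lemma getD2 (w v : List ℝ) (x y : ℝ) (i : ℕ) :
    (w ++ x :: y :: v).getD i 0 =
    if i < w.length then w.getD i 0 else if i = w.length then x
    else if i = w.length + 1 then y else v.getD (i - w.length - 2) 0 := by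
  rcases lt_or_ge i w.length with h | h
  · rw [List.getD_append _ _ _ _ h, if_pos h]
  · rw [List.getD_append_right _ _ _ _ h, if_neg (not_lt.mpr h)]
    obtain ⟨d, rfl⟩ : ∃ d, i = w.length + d := ⟨i - w.length, by omega⟩
    rw [Nat.add_sub_cancel_left]
    match d with
    | 0 => simp
    | 1 => rw [if_neg (by omega), if_pos rfl]; rfl
    | (d+2) =>
      rw [if_neg (by omega), if_neg (by omega)]
      simp [List.getD_cons_succ]

include hsym hgn in
lemma gswap_n : ∀ (w v : List ℝ) (x y : ℝ), (w ++ x :: y :: v).length = n →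
    (∀ a ∈ w ++ x :: y :: v, a ∈ I) → g (w ++ x :: y :: v) = g (w ++ y :: x :: v) := by
  intro w v x y hlen hmem
  have hlen' : (w ++ y :: x :: v).length = n := by
    simp only [List.length_append, List.length_cons] at hlen ⊢; omega
  rw [hgn _ hlen, hgn _ hlen']
  have hwn : w.length + 1 < n := by
    simp only [List.length_append, List.length_cons] at hlen; omega
  set A : Fin n := ⟨w.length, by omega⟩ with hA
  set B : Fin n := ⟨w.length + 1, hwn⟩ with hB
  set u := fun i : Fin n => (w ++ x :: y :: v).getD (i : ℕ) 0 with hu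
  have huI : ∀ i, u i ∈ I := fun i => mem_getD hmem (by rw [hlen]; exact i.isLt)
  have hAB : A ≠ B := by
    intro h
    have := congrArg (Fin.val) h
    simp [hA, hB] at this
  have e : (fun i : Fin n => (w ++ y :: x :: v).getD (i : ℕ) 0) = u ∘ Equiv.swap A B := by
    funext i
    simp only [Function.comp_apply]
    rcases eq_or_ne i A with rfl | hiA
    · rw [Equiv.swap_apply_left, hu]
      simp only [hB]
      rw [getD2, getD2]
      rw [if_neg (by simp [hA]), if_pos (by simp [hA])]
      rw [if_neg (by simp), if_neg (by simp [hA]), if_pos rfl]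
    · rcases eq_or_ne i B with rfl | hiB
      · rw [Equiv.swap_apply_right, hu]
        simp only [hA]
        rw [getD2, getD2]
        rw [if_neg (by simp [hB]), if_neg (by simp [hB]), if_pos (by simp [hB])]
        rw [if_neg (by simp), if_pos rfl]
      · rw [Equiv.swap_apply_of_ne_of_ne hiA hiB, hu]
        simp only []
        have h1 : (i : ℕ) ≠ w.length := by
          intro h; exact hiA (Fin.ext (by simp [hA, h]))
        have h2 : (i : ℕ) ≠ w.length + 1 := by
          intro h; exact hiB (Fin.ext (by simp [hB, h]))
        rw [getD2, getD2]
        rcases lt_or_ge (i : ℕ) w.length with h | h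
        · rw [if_pos h, if_pos h]
        · rw [if_neg (not_lt.mpr h), if_neg (not_lt.mpr h), if_neg h1, if_neg h1,
            if_neg h2, if_neg h2]
  rw [e]
  exact (hsym u huI (Equiv.swap A B)).symm

include hn hgrec hgn in
lemma gLHS : ∀ M : List ℝ, M.length = 2 * n - 1 →
    g M = f (fun j : Fin n => if (j : ℕ) = 0 then g (M.take n)
      else M.getD ((j : ℕ) + n - 1) 0) := by
  intro M hlen
  have h1 : M.take n ++ M.drop n = M := List.take_append_drop _ _
  have hlt : (M.take n).length = n := by rw [List.length_take]; omega
  have hld : (M.drop n).length = n - 1 := by rw [List.length_drop]; omega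
  have hmod : (M.take n).length % (n - 1) = 1 % (n - 1) := by
    rw [hlt]
    have h := Nat.add_mod_right 1 (n - 1)
    rw [show 1 + (n - 1) = n by omega] at h
    exact h
  have hne : M.take n ≠ [] := by
    intro h; rw [h] at hlt; simp at hlt; omega
  conv_lhs => rw [← h1]
  rw [hgrec _ _ hne hmod hld, hgn _ (by simp [hld]; omega)]
  congr 1
  funext j
  rcases eq_or_ne (j : ℕ) 0 with h0 | h0
  · rw [if_pos h0, show ((j : ℕ)) = 0 from h0]
    simp
  · rw [if_neg h0]
    obtain ⟨d, hd⟩ : ∃ d, (j : ℕ) = d + 1 := ⟨(j : ℕ) - 1, by omega⟩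
    rw [hd, List.getD_cons_succ]
    rw [show (d + 1) + n - 1 = n + d by omega]
    have hjd : d < (M.drop n).length := by rw [hld]; have := j.isLt; omega
    have hdn : n + d < M.length := by have := j.isLt; omega
    rw [List.getD_eq_getElem _ _ hjd, List.getD_eq_getElem _ _ hdn]
    simp [List.getElem_drop]

include hn hassoc hgn hgrec in
lemma gRHS : ∀ M : List ℝ, M.length = 2 * n - 1 → (∀ a ∈ M, a ∈ I) →
    g M = f (fun j : Fin n => if (j : ℕ) = 0 then M.getD 0 0
      else if (j : ℕ) = 1 then f (fun l : Fin n => M.getD (1 + (l : ℕ)) 0)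
      else M.getD ((j : ℕ) + n - 1) 0) := by
  intro M hlen hmem
  rw [gLHS hn hgn hgrec M hlen]
  have hlt : (M.take n).length = n := by rw [List.length_take]; omega
  have H := hassoc (fun j => M.getD j 0) (fun j hj => mem_getD hmem (by omega)) 0 (by omega)
  have e1 : (fun j : Fin n => if (j : ℕ) < 0 then M.getD (j : ℕ) 0
      else if (j : ℕ) = 0 then f (fun l : Fin n => M.getD (0 + (l : ℕ)) 0)
      else M.getD ((j : ℕ) + n - 1) 0)
      = (fun j : Fin n => if (j : ℕ) = 0 then g (M.take n)
        else M.getD ((j : ℕ) + n - 1) 0) := by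
    funext j
    rw [if_neg (Nat.not_lt_zero _)]
    rcases eq_or_ne (j : ℕ) 0 with h0 | h0
    · rw [if_pos h0, if_pos h0]
      rw [hgn (M.take n) hlt]
      congr 1
      funext l
      rw [Nat.zero_add]
      have hl : (l : ℕ) < (M.take n).length := by rw [hlt]; exact l.isLt
      rw [List.getD_eq_getElem _ _ hl, List.getD_eq_getElem _ _ (by have := l.isLt; omega)]
      simp [List.getElem_take]
    · rw [if_neg h0, if_neg h0]
  have e2 : (fun j : Fin n => if (j : ℕ) < 0 + 1 then M.getD (j : ℕ) 0
      else if (j : ℕ) = 0 + 1 then f (fun l : Fin n => M.getD (0 + 1 + (l : ℕ)) 0)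
      else M.getD ((j : ℕ) + n - 1) 0)
      = (fun j : Fin n => if (j : ℕ) = 0 then M.getD 0 0
        else if (j : ℕ) = 1 then f (fun l : Fin n => M.getD (1 + (l : ℕ)) 0)
        else M.getD ((j : ℕ) + n - 1) 0) := by
    funext j
    by_cases h0 : (j : ℕ) = 0
    · simp [h0]
    · have hlt1 : ¬ ((j : ℕ) < 0 + 1) := by omega
      by_cases h1 : (j : ℕ) = 1
      · simp [h0, h1, hlt1]
      · simp [h0, h1, hlt1]
  rw [e1, e2] at H
  exact H


include hn hmap hsym hassoc hg1 hgn hgrec in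
lemma gswap : ∀ N (w v : List ℝ) (x y : ℝ), (w ++ x :: y :: v).length = N →
    (∀ a ∈ w ++ x :: y :: v, a ∈ I) → N % (n - 1) = 1 % (n - 1) →
    g (w ++ x :: y :: v) = g (w ++ y :: x :: v) := by
  intro N
  induction N using Nat.strong_induction_on with
  | _ N IH =>
    intro w v x y hlen hmem hmod
    have hwI : ∀ a ∈ w, a ∈ I := fun a ha => hmem a (by simp [ha])
    have hxI : x ∈ I := hmem x (by simp)
    have hyI : y ∈ I := hmem y (by simp)
    have hvI : ∀ a ∈ v, a ∈ I := fun a ha => hmem a (by simp [ha])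
    have hlen0 : w.length + 2 + v.length = N := by
      simp only [List.length_append, List.length_cons] at hlen; omega
    rcases le_or_gt (n - 1) v.length with hv | hv
    · -- peel the last block of length n-1
      set v₁ := v.take (v.length - (n - 1)) with hv₁
      set v₂ := v.drop (v.length - (n - 1)) with hv₂
      have hsplit : v₁ ++ v₂ = v := List.take_append_drop _ _
      have hlen2 : v₂.length = n - 1 := by rw [hv₂, List.length_drop]; omega
      have hlen1 : v₁.length = v.length - (n - 1) := by
        rw [hv₁, List.length_take]; omega
      have e1 : w ++ x :: y :: v = (w ++ x :: y :: v₁) ++ v₂ := by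
        rw [← hsplit]; simp
      have e2 : w ++ y :: x :: v = (w ++ y :: x :: v₁) ++ v₂ := by
        rw [← hsplit]; simp
      have hlp : (w ++ x :: y :: v₁).length = N - (n - 1) := by
        simp only [List.length_append, List.length_cons, hlen1]; omega
      have hlp' : (w ++ y :: x :: v₁).length = N - (n - 1) := by
        simp only [List.length_append, List.length_cons, hlen1]; omega
      have hmodp : (N - (n - 1)) % (n - 1) = 1 % (n - 1) := by
        rw [mod_sub (by omega)]; exact hmod
      have hmemp : ∀ a ∈ w ++ x :: y :: v₁, a ∈ I := by
        intro a ha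
        simp only [List.mem_append, List.mem_cons] at ha
        rcases ha with h | h | h | h
        · exact hwI a h
        · exact h ▸ hxI
        · exact h ▸ hyI
        · exact hvI a (List.mem_of_mem_take h)
      have hin : g (w ++ x :: y :: v₁) = g (w ++ y :: x :: v₁) :=
        IH (N - (n - 1)) (by omega) w v₁ x y hlp hmemp (hlp ▸ hmodp)
      rw [e1, e2, hgrec _ _ (by simp) (by rw [hlp]; exact hmodp) hlen2,
        hgrec _ _ (by simp) (by rw [hlp']; exact hmodp) hlen2, hin]
    · -- trailing part shorter than n-1
      have hN2 : 2 ≤ N := by omega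
      have hnN : n ≤ N := len_ge hn hN2 hmod
      rcases eq_or_lt_of_le hnN with hEq | hGt
      · exact gswap_n hsym hgn w v x y (by rw [hlen, ← hEq]) hmem
      · have h2m : 2 * (n - 1) + 1 ≤ N := by
          have hge : n ≤ N - (n - 1) :=
            len_ge hn (by omega) (by rw [mod_sub (by omega)]; exact hmod)
          omega
        set K := N - 2 * (n - 1) with hK
        have hKw : K ≤ w.length := by omega
        set A := w.take K with hA
        set w₂ := w.drop K with hw₂
        have hsplitw : A ++ w₂ = w := List.take_append_drop _ _
        have hlenA : A.length = K := by rw [hA, List.length_take]; omega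
        have hlenw₂ : w₂.length = w.length - K := by rw [hw₂, List.length_drop]
        have hAne : A ≠ [] := by
          intro h; rw [h] at hlenA; simp at hlenA; omega
        have hmodA : A.length % (n - 1) = 1 % (n - 1) := by
          rw [hlenA, hK, show N - 2 * (n - 1) = N - (n - 1) - (n - 1) by omega,
            mod_sub (by omega), mod_sub (by omega)]
          exact hmod
        have hAI : ∀ a ∈ A, a ∈ I := fun a ha => hwI a (List.mem_of_mem_take ha)
        have hw₂I : ∀ a ∈ w₂, a ∈ I := fun a ha => hwI a (List.mem_of_mem_drop ha)
        have hgA : g A ∈ I :=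
          gmem hn hmap hg1 hgn hgrec A.length A rfl hAne hAI hmodA
        have hlenR : (w₂ ++ x :: y :: v).length = 2 * (n - 1) := by
          simp only [List.length_append, List.length_cons, hlenw₂]; omega
        have hlenR' : (w₂ ++ y :: x :: v).length = 2 * (n - 1) := by
          simp only [List.length_append, List.length_cons, hlenw₂]; omega
        have hmodR : (w₂ ++ x :: y :: v).length % (n - 1) = 0 := by
          rw [hlenR]; exact Nat.mul_mod_left 2 (n - 1)
        have hmodR' : (w₂ ++ y :: x :: v).length % (n - 1) = 0 := by
          rw [hlenR']; exact Nat.mul_mod_left 2 (n - 1)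
        have e1 : w ++ x :: y :: v = A ++ (w₂ ++ x :: y :: v) := by
          rw [← hsplitw]; simp
        have e2 : w ++ y :: x :: v = A ++ (w₂ ++ y :: x :: v) := by
          rw [← hsplitw]; simp
        rw [e1, e2, grep hn hg1 hgrec _ _ A rfl hAne hmodA hmodR,
          grep hn hg1 hgrec _ _ A rfl hAne hmodA hmodR']
        -- goal : g (g A :: (w₂ ++ x :: y :: v)) = g (g A :: (w₂ ++ y :: x :: v))
        rw [show g A :: (w₂ ++ x :: y :: v) = (g A :: w₂) ++ x :: y :: v by simp,
          show g A :: (w₂ ++ y :: x :: v) = (g A :: w₂) ++ y :: x :: v by simp]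
        set W := g A :: w₂ with hW
        have hlenW : W.length = 2 * (n - 1) - 1 - v.length := by
          simp only [hW, List.length_cons, hlenw₂]; omega
        have hlenM : (W ++ x :: y :: v).length = 2 * n - 1 := by
          simp only [List.length_append, List.length_cons, hlenW]; omega
        have hlenM' : (W ++ y :: x :: v).length = 2 * n - 1 := by
          simp only [List.length_append, List.length_cons, hlenW]; omega
        have hWI : ∀ a ∈ W, a ∈ I := by
          intro a ha
          rcases List.mem_cons.mp ha with rfl | h
          · exact hgA
          · exact hw₂I a h
        have hMI : ∀ a ∈ W ++ x :: y :: v, a ∈ I := by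
          intro a ha
          simp only [List.mem_append, List.mem_cons] at ha
          rcases ha with h | h | h | h
          · exact hWI a h
          · exact h ▸ hxI
          · exact h ▸ hyI
          · exact hvI a h
        have hMI' : ∀ a ∈ W ++ y :: x :: v, a ∈ I := by
          intro a ha
          simp only [List.mem_append, List.mem_cons] at ha
          rcases ha with h | h | h | h
          · exact hWI a h
          · exact h ▸ hyI
          · exact h ▸ hxI
          · exact hvI a h
        by_cases hvm : v.length = n - 2
        · -- straddle case: use associativity
          have hlW : W.length = n - 1 := by omega
          rw [gRHS hn hassoc hgn hgrec _ hlenM hMI, gRHS hn hassoc hgn hgrec _ hlenM' hMI']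
          congr 1
          funext j
          by_cases h0 : (j : ℕ) = 0
          · rw [if_pos h0, if_pos h0, getD2, getD2, if_pos (by omega), if_pos (by omega)]
          · rw [if_neg h0, if_neg h0]
            by_cases h1 : (j : ℕ) = 1
            · rw [if_pos h1, if_pos h1]
              set u := fun l : Fin n => ((W ++ x :: y :: v).getD (1 + (l : ℕ)) 0) with hu
              have huI : ∀ l, u l ∈ I := by
                intro l
                apply mem_getD hMI
                rw [hlenM]
                have := l.isLt; omega
              have hP : n - 2 < n := by omega
              have hQ : n - 1 < n := by omega
              set P : Fin n := ⟨n - 2, hP⟩ with hPd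
              set Q : Fin n := ⟨n - 1, hQ⟩ with hQd
              have e : (fun l : Fin n => (W ++ y :: x :: v).getD (1 + (l : ℕ)) 0) =
                  u ∘ Equiv.swap P Q := by
                funext l
                simp only [Function.comp_apply]
                rcases eq_or_ne l P with rfl | hlP
                · rw [Equiv.swap_apply_left, hu]
                  simp only [hQd]
                  rw [getD2, getD2]
                  have hPv : ((⟨n - 2, hP⟩ : Fin n) : ℕ) = n - 2 := rfl
                  have hQv : ((⟨n - 1, hQ⟩ : Fin n) : ℕ) = n - 1 := rfl
                  rw [if_neg (by omega), if_pos (by omega),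
                    if_neg (by omega), if_neg (by omega), if_pos (by omega)]
                · rcases eq_or_ne l Q with rfl | hlQ
                  · rw [Equiv.swap_apply_right, hu]
                    simp only [hPd]
                    rw [getD2, getD2]
                    have hPv : ((⟨n - 2, hP⟩ : Fin n) : ℕ) = n - 2 := rfl
                    have hQv : ((⟨n - 1, hQ⟩ : Fin n) : ℕ) = n - 1 := rfl
                    rw [if_neg (by omega), if_neg (by omega), if_pos (by omega),
                      if_neg (by omega), if_pos (by omega)]
                  · rw [Equiv.swap_apply_of_ne_of_ne hlP hlQ, hu]
                    simp only []
                    have hl1 : (l : ℕ) ≠ n - 2 := by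
                      intro h; exact hlP (Fin.ext (by simp [hPd, h]))
                    have hl2 : (l : ℕ) ≠ n - 1 := by
                      intro h; exact hlQ (Fin.ext (by simp [hQd, h]))
                    rw [getD2, getD2]
                    rcases lt_or_ge (1 + (l : ℕ)) W.length with h | h
                    · rw [if_pos h, if_pos h]
                    · rw [if_neg (not_lt.mpr h), if_neg (not_lt.mpr h),
                        if_neg (by omega), if_neg (by omega), if_neg (by omega),
                        if_neg (by omega)]
              rw [e]
              exact (hsym u huI (Equiv.swap P Q)).symm
            · rw [if_neg h1, if_neg h1, getD2, getD2]
              have hj2 : 2 ≤ (j : ℕ) := by omega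
              have hjn : (j : ℕ) + n - 1 ≥ W.length + 2 := by omega
              rw [if_neg (by omega), if_neg (by omega), if_neg (by omega),
                if_neg (by omega), if_neg (by omega), if_neg (by omega)]
        · -- pair within the last block: reduce to gswap_n
          have hvm2 : v.length + 2 ≤ n - 1 := by omega
          have hWn : n ≤ W.length := by omega
          set W₁ := W.take n with hW₁
          set W₂ := W.drop n with hW₂
          have hsplitW : W₁ ++ W₂ = W := List.take_append_drop _ _
          have hlenW₁ : W₁.length = n := by rw [hW₁, List.length_take]; omega
          have hlenW₂ : W₂.length = W.length - n := by rw [hW₂, List.length_drop]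
          have hW₁ne : W₁ ≠ [] := by
            intro h; rw [h] at hlenW₁; simp at hlenW₁; omega
          have hmodW₁ : W₁.length % (n - 1) = 1 % (n - 1) := by
            rw [hlenW₁]
            have h := Nat.add_mod_right 1 (n - 1)
            rw [show 1 + (n - 1) = n by omega] at h
            exact h
          have hmodrest : (W₂ ++ x :: y :: v).length % (n - 1) = 0 := by
            simp only [List.length_append, List.length_cons, hlenW₂]
            rw [show W.length - n + (v.length + 1 + 1) = n - 1 by omega]
            exact Nat.mod_self (n - 1)
          have hmodrest' : (W₂ ++ y :: x :: v).length % (n - 1) = 0 := by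
            simp only [List.length_append, List.length_cons, hlenW₂]
            rw [show W.length - n + (v.length + 1 + 1) = n - 1 by omega]
            exact Nat.mod_self (n - 1)
          have f1 : W ++ x :: y :: v = W₁ ++ (W₂ ++ x :: y :: v) := by
            rw [← hsplitW]; simp
          have f2 : W ++ y :: x :: v = W₁ ++ (W₂ ++ y :: x :: v) := by
            rw [← hsplitW]; simp
          rw [f1, f2, grep hn hg1 hgrec _ _ W₁ rfl hW₁ne hmodW₁ hmodrest,
            grep hn hg1 hgrec _ _ W₁ rfl hW₁ne hmodW₁ hmodrest']
          rw [show g W₁ :: (W₂ ++ x :: y :: v) = (g W₁ :: W₂) ++ x :: y :: v by simp,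
            show g W₁ :: (W₂ ++ y :: x :: v) = (g W₁ :: W₂) ++ y :: x :: v by simp]
          have hW₁I : ∀ a ∈ W₁, a ∈ I := fun a ha => hWI a (List.mem_of_mem_take ha)
          have hgW₁ : g W₁ ∈ I :=
            gmem hn hmap hg1 hgn hgrec W₁.length W₁ rfl hW₁ne hW₁I hmodW₁
          apply gswap_n hsym hgn
          · simp only [List.length_append, List.length_cons, List.length_cons, hlenW₂]
            omega
          · intro a ha
            simp only [List.mem_append, List.mem_cons] at ha
            rcases ha with (rfl | h') | h | h | h
            · exact hgW₁
            · exact hWI a (List.mem_of_mem_drop h')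
            · exact h ▸ hxI
            · exact h ▸ hyI
            · exact hvI a h


include hn hmap hsym hassoc hg1 hgn hgrec in
lemma gperm_aux : ∀ {l l' : List ℝ}, l.Perm l' → ∀ u : List ℝ, (∀ a ∈ u ++ l, a ∈ I) →
    (u ++ l).length % (n - 1) = 1 % (n - 1) → g (u ++ l) = g (u ++ l') := by
  intro l l' hp
  induction hp with
  | nil => intro u _ _; rfl
  | cons a hp IH =>
    rename_i l₁ l₂
    intro u hmem hlen
    rw [List.append_cons u a l₁, List.append_cons u a l₂]
    apply IH
    · intro b hb
      apply hmem
      simp only [List.mem_append, List.mem_cons] at hb ⊢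
      tauto
    · rw [← List.append_cons u a l₁]
      exact hlen
  | swap a b l =>
    intro u hmem hlen
    exact gswap hn hmap hsym hassoc hg1 hgn hgrec _ u l b a rfl hmem hlen
  | trans h₁ h₂ IH₁ IH₂ =>
    rename_i l₁ l₂ l₃
    intro u hmem hlen
    rw [IH₁ u hmem hlen]
    apply IH₂
    · intro b hb
      apply hmem
      simp only [List.mem_append] at hb ⊢
      rcases hb with h | h
      · exact Or.inl h
      · exact Or.inr (h₁.mem_iff.mpr h)
    · rw [List.length_append, ← h₁.length_eq, ← List.length_append]
      exact hlen

include hn hmap hsym hassoc hg1 hgn hgrec in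
lemma gperm {l l' : List ℝ} (hp : l.Perm l') (hmem : ∀ a ∈ l, a ∈ I)
    (hlen : l.length % (n - 1) = 1 % (n - 1)) : g l = g l' := by
  have := gperm_aux hn hmap hsym hassoc hg1 hgn hgrec hp [] (by simpa using hmem)
    (by simpa using hlen)
  simpa using this

lemma exists_rep {m p : ℕ} (hm : 1 ≤ m) (hp : 1 ≤ p) (hmod : p % m = 1 % m) :
    ∃ j, p = 1 + j * m := by
  rcases eq_or_lt_of_le hm with h1 | h1
  · exact ⟨p - 1, by rw [← h1]; omega⟩
  · have hdm := Nat.div_add_mod p m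
    rw [hmod, Nat.mod_eq_of_lt h1] at hdm
    exact ⟨p / m, by rw [Nat.mul_comm]; omega⟩

lemma mul_mod_one {m a k : ℕ} (hk : k % m = 1 % m) : (a * k) % m = a % m := by
  have h1 : (a * k) % m = (a % m * (1 % m)) % m := by rw [Nat.mul_mod, hk]
  have h2 : (a * 1) % m = (a % m * (1 % m)) % m := Nat.mul_mod a 1 m
  rw [h1, ← h2, Nat.mul_one]

lemma mul_mod_zero {m a q : ℕ} (hq : q % m = 0) : (a * q) % m = 0 := by
  rw [Nat.mul_mod, hq, Nat.mul_zero, Nat.zero_mod]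

lemma mod_cancel_one {m t : ℕ} (h : (1 + t) % m = 1 % m) : t % m = 0 := by
  have : (1 + t) % m = (1 + 0) % m := by simpa using h
  have h2 : t ≡ 0 [MOD m] := Nat.ModEq.add_left_cancel' 1 this
  simpa [Nat.ModEq] using h2

include hn hI hmap hcont hcanc hassoc hg1 hgn hgrec hc in
lemma gcpow (hcf : c < f (fun _ => c)) :
    StrictMono (fun j : ℕ => g (List.replicate (1 + j * (n - 1)) c)) := by
  have hmodp : ∀ t : ℕ, (1 + t * (n - 1)) % (n - 1) = 1 % (n - 1) := fun t =>
    Nat.add_mul_mod_self_right 1 t (n - 1)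
  have hrep : ∀ t : ℕ, List.replicate (1 + (t + 1) * (n - 1)) c =
      List.replicate (1 + t * (n - 1)) c ++ List.replicate (n - 1) c := by
    intro t
    rw [← List.replicate_add]
    congr 1
    ring
  have hstep : ∀ t : ℕ, g (List.replicate (1 + (t + 1) * (n - 1)) c) =
      g (g (List.replicate (1 + t * (n - 1)) c) :: List.replicate (n - 1) c) := by
    intro t
    rw [hrep t]
    exact hgrec _ _ (by simp) (by rw [List.length_replicate]; exact hmodp t) (by simp)
  have hmem : ∀ t : ℕ, g (List.replicate (1 + t * (n - 1)) c) ∈ I := fun t =>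
    gmem hn hmap hg1 hgn hgrec _ _ rfl (by simp)
      (fun a ha => (List.eq_of_mem_replicate ha) ▸ hc)
      (by rw [List.length_replicate]; exact hmodp t)
  have key : ∀ j : ℕ, g (List.replicate (1 + j * (n - 1)) c) <
      g (List.replicate (1 + (j + 1) * (n - 1)) c) := by
    intro j
    induction j with
    | zero =>
      rw [hstep 0]
      have h1 : g (List.replicate (1 + 0 * (n - 1)) c) = c := by
        norm_num [hg1]
      rw [h1, hgn _ (by simp; omega)]
      have e : (fun i : Fin n => (c :: List.replicate (n - 1) c).getD (i : ℕ) 0) =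
          fun _ => c := by
        funext i
        have hrepn : (c :: List.replicate (n - 1) c) = List.replicate n c := by
          rw [← List.replicate_succ]
          congr 1
          omega
        rw [hrepn, List.getD_eq_getElem _ _ (by simp), List.getElem_replicate]
      rw [e]
      exact hcf
    | succ t IH =>
      rw [hstep (t + 1)]
      conv_lhs => rw [hstep t]
      exact gstep_mono hn hI hmap hcont hcanc hassoc hgn hc _ (by simp)
        (fun a ha => (List.eq_of_mem_replicate ha) ▸ hc) _ _ (hmem t) (hmem (t + 1)) IH
  exact strictMono_nat_of_lt_succ key

include hn hI hmap hcont hcanc hassoc hg1 hgn hgrec hc in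
lemma gclt (hcf : c < f (fun _ => c)) {p p' : ℕ} (hp : 1 ≤ p)
    (hmod : p % (n - 1) = 1 % (n - 1)) (hmod' : p' % (n - 1) = 1 % (n - 1))
    (hlt : p < p') :
    g (List.replicate p c) < g (List.replicate p' c) := by
  obtain ⟨j, rfl⟩ := exists_rep (by omega : 1 ≤ n - 1) hp hmod
  obtain ⟨j', rfl⟩ := exists_rep (by omega : 1 ≤ n - 1) (by omega) hmod'
  have hjj : j < j' := by
    have h1 : j * (n - 1) < j' * (n - 1) := by omega
    exact Nat.lt_of_mul_lt_mul_right h1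
  exact gcpow hn hI hmap hcont hcanc hassoc hg1 hgn hgrec hc hcf hjj


lemma modXC {m k q : ℕ} (hk : k % m = 1 % m) (hq : q % m = 0) (j s : ℕ) :
    (j * k + (j * q + s)) % m = (j + s) % m := by
  rw [Nat.add_mod, mul_mod_one hk, Nat.add_mod (j * q) s, mul_mod_zero hq, Nat.zero_add,
    Nat.mod_mod_of_dvd s dvd_rfl, ← Nat.add_mod]

lemma add_mod_congr {m a p : ℕ} (hp : p % m = 1 % m) : (a + p) % m = (a + 1) % m := by
  rw [Nat.add_mod, hp, ← Nat.add_mod]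

include hn hI hmap hcont hcanc hassoc hg1 hgn hgrec hc in
lemma gcons_le {a b : ℝ} (ha : a ∈ I) (hb : b ∈ I) (hab : a ≤ b) (r : List ℝ)
    (hrI : ∀ u ∈ r, u ∈ I) (hmod : r.length % (n - 1) = 0) :
    g (a :: r) ≤ g (b :: r) := by
  rcases eq_or_lt_of_le hab with rfl | hlt
  · exact le_refl _
  · exact le_of_lt (gcons_lt hn hI hmap hcont hcanc hassoc hg1 hgn hgrec hc
      r.length r rfl hrI hmod a b ha hb hlt)

section Pow

variable {x : ℝ} (hx : x ∈ I) {k p q : ℕ} (hk1 : 1 ≤ k) (hp1 : 1 ≤ p)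
  (hkm : k % (n - 1) = 1 % (n - 1)) (hpm : p % (n - 1) = 1 % (n - 1))
  (hqm : q % (n - 1) = 0)

include hc hx in
lemma memXC : ∀ (i j : ℕ), ∀ a ∈ List.replicate i x ++ List.replicate j c, a ∈ I := by
  intro i j a ha
  rcases List.mem_append.mp ha with h | h
  · exact (List.eq_of_mem_replicate h) ▸ hx
  · exact (List.eq_of_mem_replicate h) ▸ hc

include hn hmap hsym hassoc hg1 hgn hgrec hx hc hk1 hkm hpm hqm in
lemma gpow_decomp (j s : ℕ) (hs : ((j + 1) + s) % (n - 1) = 1 % (n - 1)) :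
    g (List.replicate ((j + 1) * k) x ++ List.replicate ((j + 1) * q + s) c) =
    g (g (List.replicate k x ++ List.replicate q c) ::
      (List.replicate (j * k) x ++ List.replicate (j * q + s) c)) := by
  set B := List.replicate k x ++ List.replicate q c with hB
  set R := List.replicate (j * k) x ++ List.replicate (j * q + s) c with hR
  have hmodB : B.length % (n - 1) = 1 % (n - 1) := by
    simp only [hB, List.length_append, List.length_replicate]
    exact mod_one_add hkm hqm
  have hBne : B ≠ [] := by
    simp only [hB]
    intro h
    have := congrArg List.length h
    simp at this
    omega
  have hjs : (j + s) % (n - 1) = 0 := by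
    rw [show (j + 1) + s = 1 + (j + s) by omega] at hs
    exact mod_cancel_one hs
  have hmodR : R.length % (n - 1) = 0 := by
    simp only [hR, List.length_append, List.length_replicate]
    rw [modXC hkm hqm j s, hjs]
  have hperm : (List.replicate ((j + 1) * k) x ++ List.replicate ((j + 1) * q + s) c).Perm
      (B ++ R) := by
    have e1 : List.replicate ((j + 1) * k) x =
        List.replicate k x ++ List.replicate (j * k) x := by
      rw [← List.replicate_add]; congr 1; ring
    have e2 : List.replicate ((j + 1) * q + s) c =
        List.replicate q c ++ List.replicate (j * q + s) c := by
      rw [← List.replicate_add]; congr 1; ring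
    rw [e1, e2, hB, hR]
    simp only [List.append_assoc]
    apply List.Perm.append_left
    have h := (List.perm_append_comm (l₁ := List.replicate (j * k) x)
      (l₂ := List.replicate q c)).append_right (List.replicate (j * q + s) c)
    simpa [List.append_assoc] using h
  have hmemL : ∀ a ∈ List.replicate ((j + 1) * k) x ++ List.replicate ((j + 1) * q + s) c,
      a ∈ I := memXC hc hx _ _
  have hmodL : (List.replicate ((j + 1) * k) x ++
      List.replicate ((j + 1) * q + s) c).length % (n - 1) = 1 % (n - 1) := by
    simp only [List.length_append, List.length_replicate]
    rw [modXC hkm hqm (j + 1) s, hs]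
  rw [gperm hn hmap hsym hassoc hg1 hgn hgrec hperm hmemL hmodL,
    grep hn hg1 hgrec R.length R B rfl hBne hmodB hmodR]

include hn hmap hsym hassoc hg1 hgn hgrec hx hc hp1 hkm hpm hqm in
lemma gpow_recomp (j s : ℕ) (hs : ((j + 1) + s) % (n - 1) = 1 % (n - 1)) :
    g (List.replicate (j * k) x ++ List.replicate (j * q + (s + p)) c) =
    g (g (List.replicate p c) ::
      (List.replicate (j * k) x ++ List.replicate (j * q + s) c)) := by
  set R := List.replicate (j * k) x ++ List.replicate (j * q + s) c with hR
  have hjs : (j + s) % (n - 1) = 0 := by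
    rw [show (j + 1) + s = 1 + (j + s) by omega] at hs
    exact mod_cancel_one hs
  have hmodR : R.length % (n - 1) = 0 := by
    simp only [hR, List.length_append, List.length_replicate]
    rw [modXC hkm hqm j s, hjs]
  have hCpne : List.replicate p c ≠ [] := by
    intro h
    have := congrArg List.length h
    simp at this
    omega
  have hperm : (List.replicate (j * k) x ++ List.replicate (j * q + (s + p)) c).Perm
      (List.replicate p c ++ R) := by
    have e2 : List.replicate (j * q + (s + p)) c =
        List.replicate (j * q + s) c ++ List.replicate p c := by
      rw [← List.replicate_add]; congr 1; ring
    rw [e2, hR]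
    have h := List.perm_append_comm (l₁ := List.replicate (j * k) x ++
      List.replicate (j * q + s) c) (l₂ := List.replicate p c)
    simpa [List.append_assoc] using h
  have hmemL : ∀ a ∈ List.replicate (j * k) x ++ List.replicate (j * q + (s + p)) c,
      a ∈ I := memXC hc hx _ _
  have hmodL : (List.replicate (j * k) x ++
      List.replicate (j * q + (s + p)) c).length % (n - 1) = 1 % (n - 1) := by
    simp only [List.length_append, List.length_replicate]
    rw [show j * k + (j * q + (s + p)) = j * k + (j * q + s) + p by ring,
      add_mod_congr hpm, show j * k + (j * q + s) + 1 = j * k + (j * q + (s+1)) by ring,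
      modXC hkm hqm j (s + 1), show j + (s + 1) = (j + 1) + s by ring, hs]
  rw [gperm hn hmap hsym hassoc hg1 hgn hgrec hperm hmemL hmodL,
    grep hn hg1 hgrec R.length R (List.replicate p c) rfl hCpne
      (by rw [List.length_replicate]; exact hpm) hmodR]

include hn hI hmap hcont hsym hcanc hassoc hg1 hgn hgrec hx hc hk1 hp1 hkm hpm hqm in
lemma gpow_le
    (hE : g (List.replicate k x ++ List.replicate q c) ≤ g (List.replicate p c)) :
    ∀ j s, (j + s) % (n - 1) = 1 % (n - 1) →
    g (List.replicate (j * k) x ++ List.replicate (j * q + s) c) ≤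
    g (List.replicate (j * p + s) c) := by
  intro j
  induction j with
  | zero => intro s _; simp
  | succ j IH =>
    intro s hs
    have hs' : (j + (s + p)) % (n - 1) = 1 % (n - 1) := by
      rw [show j + (s + p) = (j + s) + p by ring, add_mod_congr hpm,
        show j + s + 1 = (j + 1) + s by ring]
      exact hs
    have hgB : g (List.replicate k x ++ List.replicate q c) ∈ I := by
      apply gmem hn hmap hg1 hgn hgrec _ _ rfl
      · intro h
        have := congrArg List.length h
        simp at this
        omega
      · exact memXC hc hx _ _
      · simp only [List.length_append, List.length_replicate]
        exact mod_one_add hkm hqm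
    have hgCp : g (List.replicate p c) ∈ I := by
      apply gmem hn hmap hg1 hgn hgrec _ _ rfl
      · intro h
        have := congrArg List.length h
        simp at this
        omega
      · exact fun a ha => (List.eq_of_mem_replicate ha) ▸ hc
      · rw [List.length_replicate]; exact hpm
    have hjs : (j + s) % (n - 1) = 0 := by
      rw [show (j + 1) + s = 1 + (j + s) by omega] at hs
      exact mod_cancel_one hs
    calc g (List.replicate ((j + 1) * k) x ++ List.replicate ((j + 1) * q + s) c)
        = g (g (List.replicate k x ++ List.replicate q c) ::
          (List.replicate (j * k) x ++ List.replicate (j * q + s) c)) :=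
          gpow_decomp hn hmap hsym hassoc hg1 hgn hgrec hc hx hk1 hkm hpm hqm j s hs
      _ ≤ g (g (List.replicate p c) ::
          (List.replicate (j * k) x ++ List.replicate (j * q + s) c)) := by
          apply gcons_le hn hI hmap hcont hcanc hassoc hg1 hgn hgrec hc hgB hgCp hE
          · exact memXC hc hx _ _
          · simp only [List.length_append, List.length_replicate]
            rw [modXC hkm hqm j s, hjs]
      _ = g (List.replicate (j * k) x ++ List.replicate (j * q + (s + p)) c) :=
          (gpow_recomp hn hmap hsym hassoc hg1 hgn hgrec hc hx hp1 hkm hpm hqm j s hs).symm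
      _ ≤ g (List.replicate (j * p + (s + p)) c) := IH (s + p) hs'
      _ = g (List.replicate ((j + 1) * p + s) c) := by
          rw [show j * p + (s + p) = (j + 1) * p + s by ring]

include hn hmap hsym hassoc hg1 hgn hgrec hx hc hk1 hp1 hkm hpm hqm in
lemma gpow_eq
    (hE : g (List.replicate k x ++ List.replicate q c) = g (List.replicate p c)) :
    ∀ j s, (j + s) % (n - 1) = 1 % (n - 1) →
    g (List.replicate (j * k) x ++ List.replicate (j * q + s) c) =
    g (List.replicate (j * p + s) c) := by
  intro j
  induction j with
  | zero => intro s _; simp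
  | succ j IH =>
    intro s hs
    have hs' : (j + (s + p)) % (n - 1) = 1 % (n - 1) := by
      rw [show j + (s + p) = (j + s) + p by ring, add_mod_congr hpm,
        show j + s + 1 = (j + 1) + s by ring]
      exact hs
    calc g (List.replicate ((j + 1) * k) x ++ List.replicate ((j + 1) * q + s) c)
        = g (g (List.replicate k x ++ List.replicate q c) ::
          (List.replicate (j * k) x ++ List.replicate (j * q + s) c)) :=
          gpow_decomp hn hmap hsym hassoc hg1 hgn hgrec hc hx hk1 hkm hpm hqm j s hs
      _ = g (g (List.replicate p c) ::
          (List.replicate (j * k) x ++ List.replicate (j * q + s) c)) := by rw [hE]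
      _ = g (List.replicate (j * k) x ++ List.replicate (j * q + (s + p)) c) :=
          (gpow_recomp hn hmap hsym hassoc hg1 hgn hgrec hc hx hp1 hkm hpm hqm j s hs).symm
      _ = g (List.replicate (j * p + (s + p)) c) := IH (s + p) hs'
      _ = g (List.replicate ((j + 1) * p + s) c) := by
          rw [show j * p + (s + p) = (j + 1) * p + s by ring]

include hn hI hmap hcont hsym hcanc hassoc hg1 hgn hgrec hx hc hk1 hp1 hkm hpm hqm in
lemma gpow_lt
    (hE : g (List.replicate k x ++ List.replicate q c) < g (List.replicate p c)) :
    ∀ j s, 1 ≤ j → (j + s) % (n - 1) = 1 % (n - 1) →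
    g (List.replicate (j * k) x ++ List.replicate (j * q + s) c) <
    g (List.replicate (j * p + s) c) := by
  intro j s hj hs
  obtain ⟨j', rfl⟩ : ∃ j', j = j' + 1 := ⟨j - 1, by omega⟩
  have hs' : (j' + (s + p)) % (n - 1) = 1 % (n - 1) := by
    rw [show j' + (s + p) = (j' + s) + p by ring, add_mod_congr hpm,
      show j' + s + 1 = (j' + 1) + s by ring]
    exact hs
  have hjs : (j' + s) % (n - 1) = 0 := by
    rw [show (j' + 1) + s = 1 + (j' + s) by omega] at hs
    exact mod_cancel_one hs
  have hgB : g (List.replicate k x ++ List.replicate q c) ∈ I := by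
    apply gmem hn hmap hg1 hgn hgrec _ _ rfl
    · intro h
      have := congrArg List.length h
      simp at this
      omega
    · exact memXC hc hx _ _
    · simp only [List.length_append, List.length_replicate]
      exact mod_one_add hkm hqm
  have hgCp : g (List.replicate p c) ∈ I := by
    apply gmem hn hmap hg1 hgn hgrec _ _ rfl
    · intro h
      have := congrArg List.length h
      simp at this
      omega
    · exact fun a ha => (List.eq_of_mem_replicate ha) ▸ hc
    · rw [List.length_replicate]; exact hpm
  calc g (List.replicate ((j' + 1) * k) x ++ List.replicate ((j' + 1) * q + s) c)
      = g (g (List.replicate k x ++ List.replicate q c) ::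
        (List.replicate (j' * k) x ++ List.replicate (j' * q + s) c)) :=
        gpow_decomp hn hmap hsym hassoc hg1 hgn hgrec hc hx hk1 hkm hpm hqm j' s hs
    _ < g (g (List.replicate p c) ::
        (List.replicate (j' * k) x ++ List.replicate (j' * q + s) c)) := by
        apply gcons_lt hn hI hmap hcont hcanc hassoc hg1 hgn hgrec hc _ _ rfl
          (memXC hc hx _ _) ?_ _ _ hgB hgCp hE
        simp only [List.length_append, List.length_replicate]
        rw [modXC hkm hqm j' s, hjs]
    _ = g (List.replicate (j' * k) x ++ List.replicate (j' * q + (s + p)) c) :=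
        (gpow_recomp hn hmap hsym hassoc hg1 hgn hgrec hc hx hp1 hkm hpm hqm j' s hs).symm
    _ ≤ g (List.replicate (j' * p + (s + p)) c) :=
        gpow_le hn hI hmap hcont hsym hcanc hassoc hg1 hgn hgrec hc hx hk1 hp1 hkm hpm hqm
          (le_of_lt hE) j' (s + p) hs'
    _ = g (List.replicate ((j' + 1) * p + s) c) := by
        rw [show j' * p + (s + p) = (j' + 1) * p + s by ring]

end Pow
end GLemmas
end Stmt17

/-- Claim 8: with `φ(x) = inf S_x`, if `g(c^p) = g(x^k c^q)` for some
`k, p, q+1 ∈ Aₙ`, then `φ(x) = (p-q)/k`; in particular `φ(c) = 1`. -/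
theorem stmt_17 (n : ℕ) (hn : 2 ≤ n) (I : Set ℝ) (hI : I.OrdConnected)
    (hne : ∃ a ∈ I, ∃ b ∈ I, a ≠ b)
    (f : (Fin n → ℝ) → ℝ)
    (hmap : ∀ x : Fin n → ℝ, (∀ i, x i ∈ I) → f x ∈ I)
    (hcont : ContinuousOn f {x | ∀ i, x i ∈ I})
    (hsym : SymmOn n I f) (hcanc : CancOn n I f) (hassoc : NAssocOn n I f)
    (g : List ℝ → ℝ)
    -- g is the n-associative extension of f with g₁ = id:
    (hg1 : ∀ a : ℝ, g [a] = a)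
    (hgn : ∀ l : List ℝ, l.length = n → g l = f (fun i : Fin n => l.getD (i : ℕ) 0))
    (hgrec : ∀ l r : List ℝ, l ≠ [] → l.length % (n - 1) = 1 % (n - 1) →
      r.length = n - 1 → g (l ++ r) = g (g l :: r))
    (c : ℝ) (hc : c ∈ I) (hcf : c < f (fun _ => c))
    :
    (∀ x ∈ I, ∀ k p q : ℕ,
      1 ≤ k → 1 ≤ p → k % (n - 1) = 1 % (n - 1) → p % (n - 1) = 1 % (n - 1) →
      q % (n - 1) = 0 →
      g (List.replicate k x ++ List.replicate q c) = g (List.replicate p c) →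
      sInf (SxSet n g c x) = ((p : ℝ) - (q : ℝ)) / (k : ℝ)) ∧
    sInf (SxSet n g c c) = 1 := by
  have main : ∀ x ∈ I, ∀ k p q : ℕ,
      1 ≤ k → 1 ≤ p → k % (n - 1) = 1 % (n - 1) → p % (n - 1) = 1 % (n - 1) →
      q % (n - 1) = 0 →
      g (List.replicate k x ++ List.replicate q c) = g (List.replicate p c) →
      sInf (SxSet n g c x) = ((p : ℝ) - (q : ℝ)) / (k : ℝ) := by
    intro x hx k p q hk1 hp1 hkm hpm hqm hE
    -- the elements witnessing the upper bound
    have helem : ∀ j : ℕ,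
        (((p * (1 + j * (n - 1)) + (n - 1) : ℕ) : ℝ) - ((q * (1 + j * (n - 1)) : ℕ) : ℝ)) /
          ((k * (1 + j * (n - 1)) : ℕ) : ℝ) ∈ SxSet n g c x := by
      intro j
      set M := 1 + j * (n - 1) with hMdef
      have hM1 : 1 ≤ M := by omega
      have hMm : M % (n - 1) = 1 % (n - 1) := Nat.add_mul_mod_self_right 1 j (n - 1)
      refine ⟨k * M, p * M + (n - 1), q * M, ?_, ?_, ?_, ?_, ?_, rfl, ?_⟩
      · have := Nat.mul_pos (show 0 < k by omega) (show 0 < M by omega)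
        omega
      · omega
      · rw [Nat.mul_comm, Stmt17.mul_mod_one hkm]
        exact hMm
      · rw [Nat.add_mod_right, Nat.mul_comm, Stmt17.mul_mod_one hpm]
        exact hMm
      · rw [Nat.mul_comm]
        exact Stmt17.mul_mod_zero hqm
      · have hgp := Stmt17.gpow_eq hn hmap hsym hassoc hg1 hgn hgrec hc hx hk1 hp1
          hkm hpm hqm hE M 0 (by simpa using hMm)
        calc g (List.replicate (k * M) x ++ List.replicate (q * M) c)
            = g (List.replicate (M * k) x ++ List.replicate (M * q + 0) c) := by
              rw [show k * M = M * k by ring, show q * M = M * q + 0 by ring]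
          _ = g (List.replicate (M * p + 0) c) := hgp
          _ < g (List.replicate (p * M + (n - 1)) c) := by
              apply Stmt17.gclt hn hI hmap hcont hcanc hassoc hg1 hgn hgrec hc hcf
              · have := Nat.mul_pos (show 0 < M by omega) (show 0 < p by omega)
                omega
              · rw [Nat.add_zero, Stmt17.mul_mod_one hpm]
                exact hMm
              · rw [Nat.add_mod_right, Nat.mul_comm, Stmt17.mul_mod_one hpm]
                exact hMm
              · rw [show M * p + 0 = p * M by ring]
                omega
    -- every element of S_x is strictly above (p-q)/k
    have hlb : ∀ r ∈ SxSet n g c x, ((p : ℝ) - q) / k < r := by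
      rintro r ⟨k', p', q', hk1', hp1', hkm', hpm', hqm', rfl, hlt⟩
      set t := max (q * k') (q' * k) with ht
      have hqk' : (q * k') % (n - 1) = 0 := by
        rw [Nat.mul_comm]; exact Stmt17.mul_mod_zero hqm
      have hq'k : (q' * k) % (n - 1) = 0 := by
        rw [Nat.mul_comm]; exact Stmt17.mul_mod_zero hqm'
      have h1t : q * k' ≤ t := le_max_left _ _
      have h2t : q' * k ≤ t := le_max_right _ _
      have htm : t % (n - 1) = 0 := by
        rcases max_choice (q * k') (q' * k) with h | h <;> rw [ht, h] <;> assumption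
      have hmn0 : 0 < n - 1 := by omega
      have ht1 : (t - q * k') % (n - 1) = 0 := by
        have d1 : (n - 1) ∣ t := Nat.dvd_of_mod_eq_zero htm
        have d2 : (n - 1) ∣ q * k' := Nat.dvd_of_mod_eq_zero hqk'
        exact Nat.mod_eq_zero_of_dvd (Nat.dvd_sub d1 d2)
      have ht2 : (t - q' * k) % (n - 1) = 0 := by
        have d1 : (n - 1) ∣ t := Nat.dvd_of_mod_eq_zero htm
        have d2 : (n - 1) ∣ q' * k := Nat.dvd_of_mod_eq_zero hq'k
        exact Nat.mod_eq_zero_of_dvd (Nat.dvd_sub d1 d2)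
      have hA := Stmt17.gpow_eq hn hmap hsym hassoc hg1 hgn hgrec hc hx hk1 hp1
        hkm hpm hqm hE k' (t - q * k') (Stmt17.mod_one_add hkm' ht1)
      have hB := Stmt17.gpow_lt hn hI hmap hcont hsym hcanc hassoc hg1 hgn hgrec hc hx
        hk1' hp1' hkm' hpm' hqm' hlt k (t - q' * k) hk1 (Stmt17.mod_one_add hkm ht2)
      have e1 : k' * k = k * k' := by ring
      have e2 : k' * q + (t - q * k') = k * q' + (t - q' * k) := by
        rw [show k' * q = q * k' by ring, show k * q' = q' * k by ring]
        omega
      rw [e1, e2] at hA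
      rw [hA] at hB
      -- hB : g (rep (k'*p + (t - q*k')) c) < g (rep (k*p' + (t - q'*k)) c)
      have hm1 : (k' * p + (t - q * k')) % (n - 1) = 1 % (n - 1) := by
        rw [Nat.mul_comm]
        exact Stmt17.mod_one_add (by rw [Stmt17.mul_mod_one hkm']; exact hpm) ht1
      have hm2 : (k * p' + (t - q' * k)) % (n - 1) = 1 % (n - 1) := by
        rw [Nat.mul_comm]
        exact Stmt17.mod_one_add (by rw [Stmt17.mul_mod_one hkm]; exact hpm') ht2
      have hexp : k' * p + (t - q * k') < k * p' + (t - q' * k) := by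
        by_contra hge
        push_neg at hge
        rcases eq_or_lt_of_le hge with heq | hlt2
        · rw [heq] at hB
          exact lt_irrefl _ hB
        · have hpos : 1 ≤ k * p' + (t - q' * k) := by
            have := Nat.mul_pos (show 0 < k by omega) (show 0 < p' by omega)
            omega
          have := Stmt17.gclt hn hI hmap hcont hcanc hassoc hg1 hgn hgrec hc hcf
            hpos hm2 hm1 hlt2
          exact absurd hB (not_lt.mpr (le_of_lt this))
      have hnat : p * k' + q' * k < p' * k + q * k' := by
        rw [show k' * p = p * k' by ring, show k * p' = p' * k by ring] at hexp
        omega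
      have hk0 : (0 : ℝ) < (k : ℝ) := Nat.cast_pos.mpr (by omega)
      have hk0' : (0 : ℝ) < (k' : ℝ) := Nat.cast_pos.mpr (by omega)
      rw [div_lt_div_iff₀ hk0 hk0']
      have hcast : ((p : ℝ) * k' + q' * k) < ((p' : ℝ) * k + q * k') := by
        exact_mod_cast hnat
      nlinarith [hcast]
    have hne' : (SxSet n g c x).Nonempty := ⟨_, helem 0⟩
    have hbdd : BddBelow (SxSet n g c x) :=
      ⟨((p : ℝ) - q) / k, fun r hr => le_of_lt (hlb r hr)⟩
    apply le_antisymm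
    · apply le_of_forall_pos_le_add
      intro ε hε
      obtain ⟨N, hN⟩ := exists_nat_one_div_lt hε
      set M := 1 + (N + 1) * (n - 1) with hMdef
      have hsle : sInf (SxSet n g c x) ≤
          (((p * M + (n - 1) : ℕ) : ℝ) - ((q * M : ℕ) : ℝ)) / ((k * M : ℕ) : ℝ) :=
        csInf_le hbdd (helem (N + 1))
      refine le_trans hsle ?_
      have hk0 : (0 : ℝ) < (k : ℝ) := Nat.cast_pos.mpr (by omega)
      have hM0 : (0 : ℝ) < (M : ℝ) := Nat.cast_pos.mpr (by omega)
      have hm0 : (0 : ℝ) < ((n - 1 : ℕ) : ℝ) := Nat.cast_pos.mpr (by omega)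
      have hval : (((p * M + (n - 1) : ℕ) : ℝ) - ((q * M : ℕ) : ℝ)) / ((k * M : ℕ) : ℝ) =
          ((p : ℝ) - q) / k + ((n - 1 : ℕ) : ℝ) / ((k : ℝ) * M) := by
        push_cast
        field_simp
        ring
      rw [hval]
      have hMge : ((N : ℝ) + 1) * ((n - 1 : ℕ) : ℝ) ≤ (M : ℝ) := by
        have : ((N + 1) * (n - 1) : ℕ) ≤ M := by omega
        calc ((N : ℝ) + 1) * ((n - 1 : ℕ) : ℝ) = (((N + 1) * (n - 1) : ℕ) : ℝ) := by
              push_cast; ring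
          _ ≤ (M : ℝ) := by exact_mod_cast this
      have hbound : ((n - 1 : ℕ) : ℝ) / ((k : ℝ) * M) < ε := by
        have hden : ((N : ℝ) + 1) * ((n - 1 : ℕ) : ℝ) ≤ (k : ℝ) * M := by
          have h1 : (1 : ℝ) ≤ (k : ℝ) := by exact_mod_cast hk1
          nlinarith
        have hden0 : (0 : ℝ) < ((N : ℝ) + 1) * ((n - 1 : ℕ) : ℝ) := by positivity
        calc ((n - 1 : ℕ) : ℝ) / ((k : ℝ) * M) ≤
            ((n - 1 : ℕ) : ℝ) / (((N : ℝ) + 1) * ((n - 1 : ℕ) : ℝ)) := by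
              gcongr
          _ = 1 / ((N : ℝ) + 1) := by
              rw [div_eq_div_iff (by positivity) (by positivity)]
              ring
          _ < ε := hN
      linarith
    · exact le_csInf hne' (fun r hr => le_of_lt (hlb r hr))
  refine ⟨main, ?_⟩
  have h := main c hc 1 1 0 (le_refl 1) (le_refl 1) rfl rfl (Nat.zero_mod _) (by simp)
  simpa using h
end

section
/- Main Theorem (sufficiency direction): Let J be a real interval of one of the forms (-∞,b), (-∞,b], (a,∞), [a,∞), or ℝ with b ≤ 0 ≤ a, and let φ : I → J be a continuous strictly monotonic bijection. Then f : Iⁿ → I defined by f(x₁,…,xₙ) = φ⁻¹(Σᵢ φ(xᵢ)) is continuous, symmetric, cancellative, and associative. -/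
/-- `J` is a real interval of one of the forms `(-∞,b)`, `(-∞,b]`, `(a,∞)`, `[a,∞)`,
or `ℝ`, with `b ≤ 0 ≤ a`. -/
def JForm (J : Set ℝ) : Prop :=
  (∃ b : ℝ, b ≤ 0 ∧ (J = Set.Iio b ∨ J = Set.Iic b)) ∨
  (∃ a : ℝ, 0 ≤ a ∧ (J = Set.Ioi a ∨ J = Set.Ici a)) ∨
  J = Set.univ

private lemma inv_contOn_mono {I J : Set ℝ} (hI : I.OrdConnected) (hJ : J.OrdConnected)
    {φ ψ : ℝ → ℝ} (hφ : StrictMonoOn φ I) (himg : φ '' I = J)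
    (hψI : ∀ y ∈ J, ψ y ∈ I) (hφψ : ∀ y ∈ J, φ (ψ y) = y) :
    ContinuousOn ψ J := by
  haveI := hI
  haveI := hJ
  have hmemI : ∀ x ∈ I, φ x ∈ J := fun x hx => himg ▸ Set.mem_image_of_mem φ hx
  have hψφ : ∀ x ∈ I, ψ (φ x) = x := by
    intro x hx
    exact hφ.injOn (hψI _ (hmemI x hx)) hx (hφψ _ (hmemI x hx))
  let e : J ≃o I :=
    { toFun := fun y => ⟨ψ y, hψI y y.2⟩
      invFun := fun x => ⟨φ x, hmemI x x.2⟩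
      left_inv := fun y => Subtype.ext (hφψ y y.2)
      right_inv := fun x => Subtype.ext (hψφ x x.2)
      map_rel_iff' := by
        intro a b
        simp only [Equiv.coe_fn_mk, Subtype.mk_le_mk, ← Subtype.coe_le_coe]
        conv_rhs => rw [← hφψ _ a.2, ← hφψ _ b.2]
        exact (hφ.le_iff_le (hψI _ a.2) (hψI _ b.2)).symm }
  rw [continuousOn_iff_continuous_restrict]
  have heq : J.domRestrict ψ = fun y => ((e y : I) : ℝ) := rfl
  rw [heq]
  exact continuous_subtype_val.comp e.continuous

private lemma inv_contOn {I J : Set ℝ} (hI : I.OrdConnected) (hJ : J.OrdConnected)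
    {φ ψ : ℝ → ℝ} (hmono : StrictMonoOn φ I ∨ StrictAntiOn φ I) (himg : φ '' I = J)
    (hψI : ∀ y ∈ J, ψ y ∈ I) (hφψ : ∀ y ∈ J, φ (ψ y) = y) :
    ContinuousOn ψ J := by
  rcases hmono with hm | hm
  · exact inv_contOn_mono hI hJ hm himg hψI hφψ
  · have hJ'oc : Set.OrdConnected {y : ℝ | -y ∈ J} := by
      constructor
      intro a ha b hb z hz
      exact hJ.out hb ha ⟨neg_le_neg hz.2, neg_le_neg hz.1⟩
    have hm' : StrictMonoOn (fun t => -(φ t)) I := by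
      intro a ha b hb hab
      simpa using hm ha hb hab
    have himg' : (fun t => -(φ t)) '' I = {y : ℝ | -y ∈ J} := by
      ext y
      simp only [Set.mem_image, Set.mem_setOf_eq, ← himg]
      constructor
      · rintro ⟨t, ht, rfl⟩; exact ⟨t, ht, by ring⟩
      · rintro ⟨t, ht, hty⟩; exact ⟨t, ht, by linarith⟩
    have hψI' : ∀ y ∈ {y : ℝ | -y ∈ J}, ψ (-y) ∈ I := fun y hy => hψI _ hy
    have hφψ' : ∀ y ∈ {y : ℝ | -y ∈ J}, -(φ (ψ (-y))) = y := fun y hy => by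
      rw [hφψ _ hy]; ring
    have hc : ContinuousOn (fun y => ψ (-y)) {y : ℝ | -y ∈ J} :=
      inv_contOn_mono hI hJ'oc hm' himg' hψI' hφψ'
    have hc2 := hc.comp (continuous_neg.continuousOn : ContinuousOn (fun y : ℝ => -y) J)
      (fun y hy => by simpa using hy)
    exact hc2.congr fun y hy => by simp [Function.comp]

private lemma jform_sum_mem {J : Set ℝ} (hJ : JForm J) {n : ℕ} (hn : 2 ≤ n)
    {g : Fin n → ℝ} (hg : ∀ i, g i ∈ J) : (∑ i, g i) ∈ J := by
  haveI : NeZero n := ⟨by omega⟩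
  have hcard : (Finset.univ : Finset (Fin n)).Nonempty := Finset.univ_nonempty
  have h1 : (1 : ℝ) ≤ n := by exact_mod_cast Nat.one_le_of_lt hn
  rcases hJ with ⟨b, hb, hJ | hJ⟩ | ⟨a, ha, hJ | hJ⟩ | hJ <;> subst hJ
  · have h2 : ∑ i : Fin n, g i < ∑ _i : Fin n, b :=
      Finset.sum_lt_sum_of_nonempty hcard fun i _ => hg i
    simp only [Finset.sum_const, Finset.card_univ, Fintype.card_fin, nsmul_eq_mul] at h2
    have h3 : (n : ℝ) * b ≤ b := by nlinarith
    exact Set.mem_Iio.2 (lt_of_lt_of_le h2 h3)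
  · have h2 : ∑ i : Fin n, g i ≤ ∑ _i : Fin n, b :=
      Finset.sum_le_sum fun i _ => hg i
    simp only [Finset.sum_const, Finset.card_univ, Fintype.card_fin, nsmul_eq_mul] at h2
    have h3 : (n : ℝ) * b ≤ b := by nlinarith
    exact Set.mem_Iic.2 (le_trans h2 h3)
  · have h2 : ∑ _i : Fin n, a < ∑ i : Fin n, g i :=
      Finset.sum_lt_sum_of_nonempty hcard fun i _ => hg i
    simp only [Finset.sum_const, Finset.card_univ, Fintype.card_fin, nsmul_eq_mul] at h2
    have h3 : a ≤ (n : ℝ) * a := by nlinarith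
    exact Set.mem_Ioi.2 (lt_of_le_of_lt h3 h2)
  · have h2 : ∑ _i : Fin n, a ≤ ∑ i : Fin n, g i :=
      Finset.sum_le_sum fun i _ => hg i
    simp only [Finset.sum_const, Finset.card_univ, Fintype.card_fin, nsmul_eq_mul] at h2
    have h3 : a ≤ (n : ℝ) * a := by nlinarith
    exact Set.mem_Ici.2 (le_trans h3 h2)
  · exact Set.mem_univ _

private lemma sum_split (φ : ℝ → ℝ) (x : ℕ → ℝ) {n k : ℕ} (hk : k < n) (y : ℝ)
    (hy : φ y = ∑ l ∈ Finset.range n, φ (x (k + l))) :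
    ∑ j ∈ Finset.range n, φ (if j < k then x j else if j = k then y else x (j + n - 1))
      = ∑ m ∈ Finset.range (2 * n - 1), φ (x m) := by
  rw [Finset.range_eq_Ico, ← Finset.sum_Ico_consecutive _ (Nat.zero_le k) hk.le,
    Finset.sum_eq_sum_Ico_succ_bot hk]
  have hterm : (if k < k then x k else if k = k then y else x (k + n - 1)) = y := by simp
  rw [hterm, hy]
  conv_rhs => rw [Finset.range_eq_Ico,
    ← Finset.sum_Ico_consecutive _ (Nat.zero_le k) (by omega : k ≤ 2 * n - 1),
    ← Finset.sum_Ico_consecutive _ (by omega : k ≤ k + n) (by omega : k + n ≤ 2 * n - 1)]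
  congr 1
  · refine Finset.sum_congr rfl fun j hj => ?_
    rw [if_pos (Finset.mem_Ico.1 hj).2]
  congr 1
  · rw [Finset.sum_Ico_eq_sum_range, Nat.add_sub_cancel_left]
  · have h1 : ∑ j ∈ Finset.Ico (k + 1) n,
        φ (if j < k then x j else if j = k then y else x (j + n - 1))
        = ∑ j ∈ Finset.Ico (k + 1) n, φ (x (j + n - 1)) := by
      refine Finset.sum_congr rfl fun j hj => ?_
      have hj1 := (Finset.mem_Ico.1 hj).1
      rw [if_neg (by omega), if_neg (by omega)]
    rw [h1, Finset.sum_Ico_eq_sum_range, Finset.sum_Ico_eq_sum_range,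
      show n - (k + 1) = 2 * n - 1 - (k + n) from by omega]
    exact Finset.sum_congr rfl fun t _ => by
      rw [show k + 1 + t + n - 1 = k + n + t from by omega]

/-- Main Theorem, sufficiency: if `φ : I → J` is a continuous strictly monotonic
bijection onto an interval `J` of one of the admissible forms, then
`f(x₁,…,xₙ) = φ⁻¹(∑ φ(xᵢ))` is continuous, symmetric, cancellative and associative. -/
theorem stmt_18 (n : ℕ) (hn : 2 ≤ n) (I : Set ℝ) (hI : I.OrdConnected)
    (hne : ∃ a ∈ I, ∃ b ∈ I, a ≠ b)
    (J : Set ℝ) (hJ : JForm J)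
    (φ : ℝ → ℝ) (hmono : StrictMonoOn φ I ∨ StrictAntiOn φ I)
    (hφcont : ContinuousOn φ I) (hbij : φ '' I = J)
    (f : (Fin n → ℝ) → ℝ)
    -- f(x) = φ⁻¹(∑ φ(xᵢ)) on Iⁿ, i.e. f x ∈ I and φ(f x) = ∑ φ(xᵢ):
    (hf : ∀ x : Fin n → ℝ, (∀ i, x i ∈ I) →
      f x ∈ I ∧ φ (f x) = ∑ i : Fin n, φ (x i)) :
    ContinuousOn f {x | ∀ i, x i ∈ I} ∧ SymmOn n I f ∧ CancOn n I f ∧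
      NAssocOn n I f := by
  have hinj : Set.InjOn φ I := by
    rcases hmono with h | h
    · exact h.injOn
    · exact h.injOn
  have hJmem : ∀ x ∈ I, φ x ∈ J := fun x hx => hbij ▸ Set.mem_image_of_mem φ hx
  set ψ := Function.invFunOn φ I with hψdef
  have hψI : ∀ y ∈ J, ψ y ∈ I := by
    intro y hy
    rw [← hbij] at hy
    obtain ⟨x, hx, hxy⟩ := hy
    exact Function.invFunOn_mem ⟨x, hx, hxy⟩
  have hφψ : ∀ y ∈ J, φ (ψ y) = y := by
    intro y hy
    rw [← hbij] at hy
    obtain ⟨x, hx, hxy⟩ := hy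
    exact Function.invFunOn_eq ⟨x, hx, hxy⟩
  have hψφ : ∀ x ∈ I, ψ (φ x) = x := fun x hx => hinj.leftInvOn_invFunOn hx
  have hJoc : J.OrdConnected := by
    rcases hJ with ⟨b, _, rfl | rfl⟩ | ⟨a, _, rfl | rfl⟩ | rfl
    · exact Set.ordConnected_Iio
    · exact Set.ordConnected_Iic
    · exact Set.ordConnected_Ioi
    · exact Set.ordConnected_Ici
    · exact Set.ordConnected_univ
  refine ⟨?_, ?_, ?_, ?_⟩
  · -- continuity
    have hψcont : ContinuousOn ψ J := inv_contOn hI hJoc hmono hbij hψI hφψ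
    have hsumcont : ContinuousOn (fun x : Fin n → ℝ => ∑ i, φ (x i)) {x | ∀ i, x i ∈ I} := by
      apply continuousOn_finset_sum
      intro i _
      exact hφcont.comp (continuous_apply i).continuousOn fun x hx => hx i
    have hsummem : ∀ x ∈ {x : Fin n → ℝ | ∀ i, x i ∈ I}, (∑ i, φ (x i)) ∈ J :=
      fun x hx => jform_sum_mem hJ hn fun i => hJmem _ (hx i)
    have h1 : ContinuousOn (fun x : Fin n → ℝ => ψ (∑ i, φ (x i))) {x | ∀ i, x i ∈ I} :=
      hψcont.comp hsumcont hsummem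
    refine h1.congr fun x hx => ?_
    show f x = ψ (∑ i, φ (x i))
    rw [← (hf x hx).2, hψφ _ (hf x hx).1]
  · -- symmetry
    intro x hx σ
    have hxσ : ∀ i, (x ∘ σ) i ∈ I := fun i => hx (σ i)
    have h1 := hf _ hxσ
    have h2 := hf x hx
    apply hinj h1.1 h2.1
    rw [h1.2, h2.2]
    exact Fintype.sum_equiv σ _ _ fun i => rfl
  · -- cancellativity
    intro k x x' hx hx' hagree hfeq
    apply hinj (hx k) (hx' k)
    have h1 := (hf x hx).2
    have h2 := (hf x' hx').2
    have hs : ∑ i, φ (x i) = ∑ i, φ (x' i) := by rw [← h1, ← h2, hfeq]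
    have hrest : ∑ i ∈ Finset.univ.erase k, φ (x i) = ∑ i ∈ Finset.univ.erase k, φ (x' i) :=
      Finset.sum_congr rfl fun i hi => by rw [hagree i (Finset.ne_of_mem_erase hi)]
    have e1 := Finset.add_sum_erase Finset.univ (fun i => φ (x i)) (Finset.mem_univ k)
    have e2 := Finset.add_sum_erase Finset.univ (fun i => φ (x' i)) (Finset.mem_univ k)
    linarith
  · -- associativity
    intro x hx i hi
    have key : ∀ k : ℕ, k < n →
        f (fun j : Fin n => if (j : ℕ) < k then x j
            else if (j : ℕ) = k then f (fun l : Fin n => x (k + (l : ℕ)))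
            else x ((j : ℕ) + n - 1)) ∈ I ∧
        φ (f (fun j : Fin n => if (j : ℕ) < k then x j
            else if (j : ℕ) = k then f (fun l : Fin n => x (k + (l : ℕ)))
            else x ((j : ℕ) + n - 1))) = ∑ m ∈ Finset.range (2 * n - 1), φ (x m) := by
      intro k hk
      have hinner : ∀ l : Fin n, x (k + (l : ℕ)) ∈ I := fun l =>
        hx _ (by have := l.isLt; omega)
      have hinf := hf _ hinner
      have hgmem : ∀ j : Fin n, (if (j : ℕ) < k then x j
            else if (j : ℕ) = k then f (fun l : Fin n => x (k + (l : ℕ)))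
            else x ((j : ℕ) + n - 1)) ∈ I := by
        intro j
        have hj := j.isLt
        split_ifs with h1 h2
        · exact hx _ (by omega)
        · exact hinf.1
        · exact hx _ (by omega)
      have hfg := hf _ hgmem
      refine ⟨hfg.1, ?_⟩
      rw [hfg.2]
      have hy : φ (f (fun l : Fin n => x (k + (l : ℕ))))
          = ∑ l ∈ Finset.range n, φ (x (k + l)) :=
        hinf.2.trans (Fin.sum_univ_eq_sum_range (fun l => φ (x (k + l))) n)
      rw [← sum_split φ x hk _ hy]
      exact Fin.sum_univ_eq_sum_range
        (fun m => φ (if m < k then x m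
          else if m = k then f (fun l : Fin n => x (k + (l : ℕ))) else x (m + n - 1))) n
    obtain ⟨hL1, hL2⟩ := key i (by omega)
    obtain ⟨hR1, hR2⟩ := key (i + 1) hi
    exact hinj hL1 hR1 (hL2.trans hR2.symm)
end
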